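/- Let (f_0, …, f_n) be a cocycle system of depth n and weight m. For 0 ≤ i ≤ n+1 define f̃_i := (i(m−i+1)/(n+1))·f_{i−1} + ((n+1−i)/(n+1))·(d f_i/dz), with the conventions f_{−1} = f_{n+1} = 0. Then (f̃_0, …, f̃_{n+1}) is a cocycle system of depth n+1 and weight m+2, with f̃_0 = d f_0/dz. Moreover, for every A ∈ GL⁺(2,ℝ), d/dz (f||_m A) = (f')||_{m+2} A, where f' := d f_0/dz and the double-slash on the right is taken with respect to the system (f̃_0, …, f̃_{n+1}). (Hence differentiation maps M^n_m to M^{n+1}_{m+2}.) -/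

import Mathlib

open Complex Finset

/-- A cocycle system of depth `n` and weight `m`: a tuple `(f 0, …, f n)` of holomorphic
functions on the upper half plane satisfying the defining transformation rule under
`SL(2,ℤ)`. -/
def IsCocycleSystem (n : ℕ) (m : ℤ) (f : ℕ → ℂ → ℂ) : Prop :=
  (∀ i ≤ n, DifferentiableOn ℂ (f i) {z : ℂ | 0 < z.im}) ∧
  ∀ A : Matrix (Fin 2) (Fin 2) ℤ, A.det = 1 → ∀ i ≤ n, ∀ z : ℂ, 0 < z.im →
    f i (((A 0 0 : ℂ) * z + (A 0 1 : ℂ)) / ((A 1 0 : ℂ) * z + (A 1 1 : ℂ))) =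
      ∑ j ∈ Finset.range (n - i + 1),
        ((n - i).choose j : ℂ) * (A 1 0 : ℂ) ^ j *
          ((A 1 0 : ℂ) * z + (A 1 1 : ℂ)) ^ (m - 2 * (i : ℤ) - (j : ℤ)) * f (i + j) z

/-- The double slash operator `(f‖_m A)(z)` for a cocycle system and `A ∈ GL⁺(2,ℝ)`. -/
noncomputable def dslash (n : ℕ) (m : ℤ) (f : ℕ → ℂ → ℂ)
    (A : Matrix (Fin 2) (Fin 2) ℝ) (z : ℂ) : ℂ :=
  ((A.det : ℂ)) ^ (m - (n : ℤ) - 1) *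
    ∑ i ∈ Finset.range (n + 1),
      (n.choose i : ℂ) * (-(A 1 0 : ℂ) / (A.det : ℂ)) ^ i *
        ((A 1 0 : ℂ) * z + (A 1 1 : ℂ)) ^ ((i : ℤ) - m) *
        f i (((A 0 0 : ℂ) * z + (A 0 1 : ℂ)) / ((A 1 0 : ℂ) * z + (A 1 1 : ℂ)))

/-- The system of derivatives `f̃ᵢ = (i(m-i+1)/(n+1)) f_{i-1} + ((n+1-i)/(n+1)) fᵢ'`.
(For `i = 0` and `i = n+1` the coefficient of the undefined term vanishes, implementing the
conventions `f₋₁ = f_{n+1} = 0`.) -/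
noncomputable def derivSystem (n : ℕ) (m : ℤ) (f : ℕ → ℂ → ℂ) : ℕ → ℂ → ℂ :=
  fun i z =>
    ((i : ℂ) * ((m : ℂ) - (i : ℂ) + 1) / ((n : ℂ) + 1)) * f (i - 1) z +
      (((n : ℂ) + 1 - (i : ℂ)) / ((n : ℂ) + 1)) * deriv (f i) z

lemma isOpenUHP : IsOpen {z : ℂ | 0 < z.im} := isOpen_lt continuous_const Complex.continuous_im

lemma denom_ne_zero (a b c d : ℝ) (hdet : a * d - b * c ≠ 0) {z : ℂ} (hz : 0 < z.im) :
    (c : ℂ) * z + (d : ℂ) ≠ 0 := by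
  intro h
  have him : c * z.im = 0 := by
    have := congrArg Complex.im h
    simpa using this
  have hc : c = 0 := by
    rcases mul_eq_zero.1 him with h' | h'
    · exact h'
    · exact absurd h' hz.ne'
  subst hc
  have hd : d = 0 := by
    have := congrArg Complex.re h
    simpa using this
  subst hd
  simp at hdet

lemma mobius_im (a b c d : ℝ) {z : ℂ} (hz : 0 < z.im) (hw : (c : ℂ) * z + (d : ℂ) ≠ 0) :
    (((a : ℂ) * z + b) / ((c : ℂ) * z + d)).im
      = (a * d - b * c) * z.im / Complex.normSq ((c : ℂ) * z + d) := by
  rw [Complex.div_im, ← sub_div]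
  congr 1
  simp [Complex.mul_re, Complex.mul_im]
  ring

lemma mobius_mem (a b c d : ℝ) (hdet : 0 < a * d - b * c) {z : ℂ} (hz : 0 < z.im) :
    0 < (((a : ℂ) * z + b) / ((c : ℂ) * z + d)).im := by
  have hw : (c : ℂ) * z + (d : ℂ) ≠ 0 := denom_ne_zero a b c d hdet.ne' hz
  rw [mobius_im a b c d hz hw]
  exact div_pos (mul_pos hdet hz) (Complex.normSq_pos.2 hw)

lemma hasDerivAt_mobius (a b c d : ℂ) {z : ℂ} (hw : c * z + d ≠ 0) :
    HasDerivAt (fun z : ℂ => (a * z + b) / (c * z + d))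
      ((a * d - b * c) / (c * z + d) ^ 2) z := by
  have h1 : HasDerivAt (fun z : ℂ => a * z + b) a z := by
    simpa using ((hasDerivAt_id z).const_mul a).add_const b
  have h2 : HasDerivAt (fun z : ℂ => c * z + d) c z := by
    simpa using ((hasDerivAt_id z).const_mul c).add_const d
  have := h1.fun_div h2 hw
  refine this.congr_deriv ?_
  ring

lemma hasDerivAt_comp_mobius {f : ℂ → ℂ} (a b c d : ℂ) {z : ℂ} (hw : c * z + d ≠ 0)
    (hd : DifferentiableAt ℂ f ((a * z + b) / (c * z + d))) :
    HasDerivAt (fun z : ℂ => f ((a * z + b) / (c * z + d)))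
      (deriv f ((a * z + b) / (c * z + d)) * ((a * d - b * c) / (c * z + d) ^ 2)) z :=
  hd.hasDerivAt.comp z (hasDerivAt_mobius a b c d hw)

lemma deriv_diffOn {f : ℂ → ℂ} (h : DifferentiableOn ℂ f {z : ℂ | 0 < z.im}) :
    DifferentiableOn ℂ (deriv f) {z : ℂ | 0 < z.im} :=
  ((h.analyticOnNhd isOpenUHP).deriv).differentiableOn

lemma hasDerivAt_term {F : ℂ → ℂ} {F' : ℂ} (K c d : ℂ) (E : ℤ) {z : ℂ} (hw : c * z + d ≠ 0)
    (hF : HasDerivAt F F' z) :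
    HasDerivAt (fun z : ℂ => K * (c * z + d) ^ E * F z)
      (K * ((E : ℂ) * (c * z + d) ^ (E - 1) * c) * F z + K * (c * z + d) ^ E * F') z := by
  have h2 : HasDerivAt (fun z : ℂ => c * z + d) c z := by
    simpa using ((hasDerivAt_id z).const_mul c).add_const d
  have hpow : HasDerivAt (fun z : ℂ => (c * z + d) ^ E)
      ((E : ℂ) * (c * z + d) ^ (E - 1) * c) z :=
    by exact (hasDerivAt_zpow E (c * z + d) (Or.inl hw)).comp z h2
  exact (hpow.const_mul K).mul hF

lemma assembly (N : ℕ) (L U V T : ℕ → ℂ)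
    (hUV : ∀ j ∈ Finset.range (N + 1), L (j + 1) + U j + V (j + 1) = T (j + 1))
    (h0 : L 0 + V 0 = T 0)
    (hVtop : V (N + 1) = 0) :
    (∑ j ∈ Finset.range (N + 1 + 1), L j) +
      ((∑ j ∈ Finset.range (N + 1), U j) + (∑ j ∈ Finset.range (N + 1), V j)) =
      ∑ j ∈ Finset.range (N + 1 + 1), T j := by
  have hV : (∑ j ∈ Finset.range (N + 1), V j)
      = (∑ j ∈ Finset.range (N + 1), V (j + 1)) + V 0 := by
    rw [Finset.sum_range_succ' V N, Finset.sum_range_succ (fun j => V (j + 1)) N, hVtop, add_zero]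
  have hM : ∑ j ∈ Finset.range (N + 1), (L (j + 1) + U j + V (j + 1))
      = ∑ j ∈ Finset.range (N + 1), T (j + 1) := Finset.sum_congr rfl hUV
  rw [Finset.sum_range_succ' L (N + 1), Finset.sum_range_succ' T (N + 1), hV]
  rw [Finset.sum_add_distrib, Finset.sum_add_distrib] at hM
  linear_combination hM + h0

lemma assembly2 (N : ℕ) (W TA TB T : ℕ → ℂ)
    (hT : ∀ i ∈ Finset.range (N + 1 + 1), T i = TA i + TB i)
    (hW : ∀ i ∈ Finset.range (N + 1), W i = TA (i + 1) + TB i)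
    (hTA0 : TA 0 = 0) (hTBtop : TB (N + 1) = 0) :
    ∑ i ∈ Finset.range (N + 1), W i = ∑ i ∈ Finset.range (N + 1 + 1), T i := by
  rw [Finset.sum_congr rfl hT, Finset.sum_add_distrib, Finset.sum_range_succ' TA (N + 1),
    Finset.sum_range_succ TB (N + 1), hTA0, hTBtop, add_zero, add_zero,
    ← Finset.sum_add_distrib]
  exact Finset.sum_congr rfl hW

lemma key1 (n : ℕ) (m : ℤ) (f : ℕ → ℂ → ℂ) (a b c d : ℂ)
    (hdiff : ∀ i ≤ n, DifferentiableOn ℂ (f i) {z : ℂ | 0 < z.im})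
    (hdet : a * d - b * c = 1)
    (i : ℕ) (hi : i ≤ n) (z : ℂ) (hz : 0 < z.im)
    (hw : c * z + d ≠ 0) (hgz : 0 < ((a * z + b) / (c * z + d)).im)
    (htr : ∀ k ≤ n, ∀ x : ℂ, 0 < x.im →
      f k ((a * x + b) / (c * x + d)) = ∑ j ∈ Finset.range (n - k + 1),
        ((n - k).choose j : ℂ) * c ^ j * (c * x + d) ^ (m - 2 * (k : ℤ) - (j : ℤ)) * f (k + j) x) :
    derivSystem n m f i ((a * z + b) / (c * z + d)) =
      ∑ j ∈ Finset.range (n + 1 - i + 1),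
        ((n + 1 - i).choose j : ℂ) * c ^ j * (c * z + d) ^ (m + 2 - 2 * (i : ℤ) - (j : ℤ)) *
          derivSystem n m f (i + j) z := by
  have hn1 : ((n : ℂ) + 1) ≠ 0 := Nat.cast_add_one_ne_zero n
  have hfz : ∀ k, k ≤ n → HasDerivAt (f k) (deriv (f k) z) z := fun k hk =>
    ((hdiff k hk).differentiableAt (isOpenUHP.mem_nhds hz)).hasDerivAt
  have hDgz : DifferentiableAt ℂ (f i) ((a * z + b) / (c * z + d)) :=
    (hdiff i hi).differentiableAt (isOpenUHP.mem_nhds hgz)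
  have hLHS : HasDerivAt (fun x : ℂ => f i ((a * x + b) / (c * x + d)))
      (deriv (f i) ((a * z + b) / (c * z + d)) * ((a * d - b * c) / (c * z + d) ^ 2)) z :=
    hasDerivAt_comp_mobius a b c d hw hDgz
  have hRHS : HasDerivAt (fun x : ℂ => ∑ j ∈ Finset.range (n - i + 1),
        ((n - i).choose j : ℂ) * c ^ j * (c * x + d) ^ (m - 2 * (i : ℤ) - (j : ℤ)) * f (i + j) x)
      (∑ j ∈ Finset.range (n - i + 1),
        (((n - i).choose j : ℂ) * c ^ j *
            (((m - 2 * (i : ℤ) - (j : ℤ) : ℤ) : ℂ) *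
              (c * z + d) ^ (m - 2 * (i : ℤ) - (j : ℤ) - 1) * c) * f (i + j) z +
          ((n - i).choose j : ℂ) * c ^ j *
            (c * z + d) ^ (m - 2 * (i : ℤ) - (j : ℤ)) * deriv (f (i + j)) z)) z := by
    apply HasDerivAt.fun_sum
    intro j hj
    exact hasDerivAt_term (((n - i).choose j : ℂ) * c ^ j) c d (m - 2 * (i : ℤ) - (j : ℤ)) hw
      (hfz (i + j) (by have := Finset.mem_range.mp hj; omega))
  rw [Finset.sum_add_distrib] at hRHS
  have heqv : (fun x : ℂ => f i ((a * x + b) / (c * x + d))) =ᶠ[nhds z]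
      (fun x : ℂ => ∑ j ∈ Finset.range (n - i + 1),
        ((n - i).choose j : ℂ) * c ^ j * (c * x + d) ^ (m - 2 * (i : ℤ) - (j : ℤ)) * f (i + j) x) := by
    filter_upwards [isOpenUHP.mem_nhds hz] with x hx using htr i hi x hx
  have hkey : deriv (f i) ((a * z + b) / (c * z + d)) * ((a * d - b * c) / (c * z + d) ^ 2)
      = (∑ j ∈ Finset.range (n - i + 1),
          ((n - i).choose j : ℂ) * c ^ j *
            (((m - 2 * (i : ℤ) - (j : ℤ) : ℤ) : ℂ) *
              (c * z + d) ^ (m - 2 * (i : ℤ) - (j : ℤ) - 1) * c) * f (i + j) z) +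
        (∑ j ∈ Finset.range (n - i + 1),
          ((n - i).choose j : ℂ) * c ^ j *
            (c * z + d) ^ (m - 2 * (i : ℤ) - (j : ℤ)) * deriv (f (i + j)) z) := by
    rw [← hLHS.deriv, heqv.deriv_eq]
    exact hRHS.deriv
  rw [hdet] at hkey
  have h2 : deriv (f i) ((a * z + b) / (c * z + d)) * ((1 : ℂ) / (c * z + d) ^ 2) * (c * z + d) ^ 2
      = deriv (f i) ((a * z + b) / (c * z + d)) := by
    rw [mul_assoc, one_div, inv_mul_cancel₀ (pow_ne_zero 2 hw), mul_one]
  have hder : deriv (f i) ((a * z + b) / (c * z + d))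
      = (c * z + d) ^ 2 * (∑ j ∈ Finset.range (n - i + 1),
          ((n - i).choose j : ℂ) * c ^ j *
            (((m - 2 * (i : ℤ) - (j : ℤ) : ℤ) : ℂ) *
              (c * z + d) ^ (m - 2 * (i : ℤ) - (j : ℤ) - 1) * c) * f (i + j) z) +
        (c * z + d) ^ 2 * (∑ j ∈ Finset.range (n - i + 1),
          ((n - i).choose j : ℂ) * c ^ j *
            (c * z + d) ^ (m - 2 * (i : ℤ) - (j : ℤ)) * deriv (f (i + j)) z) := by
    linear_combination ((c * z + d) ^ 2) * hkey - h2
  have hα : ((i : ℂ) * ((m : ℂ) - (i : ℂ) + 1) / ((n : ℂ) + 1)) * f (i - 1) ((a * z + b) / (c * z + d))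
      = ∑ j ∈ Finset.range (n - i + 1 + 1),
          ((i : ℂ) * ((m : ℂ) - (i : ℂ) + 1) / ((n : ℂ) + 1)) *
            (((n - i + 1).choose j : ℂ) * c ^ j *
              (c * z + d) ^ (m + 2 - 2 * (i : ℤ) - (j : ℤ)) * f (i + j - 1) z) := by
    rcases Nat.eq_zero_or_pos i with h0 | h1
    · subst h0; simp
    · rw [htr (i - 1) (by omega) z hz, Finset.mul_sum]
      rw [show n - (i - 1) + 1 = n - i + 1 + 1 from by omega]
      refine Finset.sum_congr rfl fun j hj => ?_
      rw [show n - (i - 1) = n - i + 1 from by omega,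
        show i - 1 + j = i + j - 1 from by omega,
        show m - 2 * ((i - 1 : ℕ) : ℤ) - (j : ℤ) = m + 2 - 2 * (i : ℤ) - (j : ℤ) from by omega]
  simp only [derivSystem]
  rw [show n + 1 - i = n - i + 1 from by omega]
  rw [hα, hder, Finset.mul_sum, Finset.mul_sum,
    mul_add (((n : ℂ) + 1 - (i : ℂ)) / ((n : ℂ) + 1)), Finset.mul_sum, Finset.mul_sum]
  refine assembly (n - i) _ _ _ _ ?_ ?_ ?_
  · intro j hj
    have hj' : j < n - i + 1 := Finset.mem_range.mp hj
    rw [show i + (j + 1) - 1 = i + j from by omega]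
    rw [show m + 2 - 2 * (i : ℤ) - ((j + 1 : ℕ) : ℤ)
          = (m - 2 * (i : ℤ) - (j : ℤ) - 1) + ((2 : ℕ) : ℤ) from by push_cast; ring,
      zpow_add₀ hw, zpow_natCast]
    rw [show m - 2 * (i : ℤ) - ((j + 1 : ℕ) : ℤ) = m - 2 * (i : ℤ) - (j : ℤ) - 1 from by
      push_cast; ring]
    have h1 := congrArg (Nat.cast (R := ℂ)) (Nat.add_one_mul_choose_eq (n - i) j)
    have h2c := congrArg (Nat.cast (R := ℂ)) (Nat.choose_mul_succ_eq (n - i) (j + 1))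
    push_cast [Nat.cast_sub hi] at h1
    push_cast [Nat.cast_sub hi, Nat.cast_sub (show j + 1 ≤ n - i + 1 by omega),
      Nat.cast_sub (show j ≤ n - i by omega)] at h2c
    push_cast
    linear_combination
      (((m : ℂ) - 2 * (i : ℂ) - (j : ℂ)) * c ^ (j + 1) *
          (c * z + d) ^ (m - 2 * (i : ℤ) - (j : ℤ) - 1) * (c * z + d) ^ 2 * f (i + j) z /
          ((n : ℂ) + 1)) * h1 +
      (c ^ (j + 1) * (c * z + d) ^ (m - 2 * (i : ℤ) - (j : ℤ) - 1) * (c * z + d) ^ 2 *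
          deriv (f (i + (j + 1))) z / ((n : ℂ) + 1)) * h2c
  · simp only [Nat.add_zero, Nat.choose_zero_right, Nat.cast_one, one_mul, pow_zero,
      Nat.cast_zero, sub_zero, mul_one]
    rw [show m + 2 - 2 * (i : ℤ) = (m - 2 * (i : ℤ)) + ((2 : ℕ) : ℤ) from by push_cast; ring,
      zpow_add₀ hw, zpow_natCast]
    ring
  · rw [Nat.choose_succ_self (n - i)]
    simp

lemma key3 (n : ℕ) (m : ℤ) (f : ℕ → ℂ → ℂ) (a b c d Δ : ℂ)
    (hdiff : ∀ i ≤ n, DifferentiableOn ℂ (f i) {z : ℂ | 0 < z.im})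
    (hdet : a * d - b * c = Δ) (hΔ : Δ ≠ 0)
    (z : ℂ) (hz : 0 < z.im) (hw : c * z + d ≠ 0)
    (hgz : 0 < ((a * z + b) / (c * z + d)).im) :
    deriv (fun x : ℂ => Δ ^ (m - (n : ℤ) - 1) * ∑ i ∈ Finset.range (n + 1),
        (n.choose i : ℂ) * (-c / Δ) ^ i * (c * x + d) ^ ((i : ℤ) - m) *
          f i ((a * x + b) / (c * x + d))) z
      = Δ ^ (m + 2 - ((n + 1 : ℕ) : ℤ) - 1) * ∑ i ∈ Finset.range (n + 1 + 1),
          ((n + 1).choose i : ℂ) * (-c / Δ) ^ i * (c * z + d) ^ ((i : ℤ) - (m + 2)) *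
            derivSystem n m f i ((a * z + b) / (c * z + d)) := by
  have hn1 : ((n : ℂ) + 1) ≠ 0 := Nat.cast_add_one_ne_zero n
  have hF : ∀ i, i ≤ n → HasDerivAt (fun x : ℂ => f i ((a * x + b) / (c * x + d)))
      (deriv (f i) ((a * z + b) / (c * z + d)) * (Δ / (c * z + d) ^ 2)) z := by
    intro i hi
    have := hasDerivAt_comp_mobius a b c d hw
      ((hdiff i hi).differentiableAt (isOpenUHP.mem_nhds hgz))
    rwa [hdet] at this
  have hSum : HasDerivAt (fun x : ℂ => ∑ i ∈ Finset.range (n + 1),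
      (n.choose i : ℂ) * (-c / Δ) ^ i * (c * x + d) ^ ((i : ℤ) - m) *
        f i ((a * x + b) / (c * x + d)))
      (∑ i ∈ Finset.range (n + 1),
        ((n.choose i : ℂ) * (-c / Δ) ^ i *
            ((((i : ℤ) - m : ℤ) : ℂ) * (c * z + d) ^ ((i : ℤ) - m - 1) * c) *
            f i ((a * z + b) / (c * z + d)) +
          (n.choose i : ℂ) * (-c / Δ) ^ i * (c * z + d) ^ ((i : ℤ) - m) *
            (deriv (f i) ((a * z + b) / (c * z + d)) * (Δ / (c * z + d) ^ 2)))) z := by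
    apply HasDerivAt.fun_sum
    intro i hi
    exact hasDerivAt_term ((n.choose i : ℂ) * (-c / Δ) ^ i) c d ((i : ℤ) - m) hw
      (hF i (by have := Finset.mem_range.mp hi; omega))
  have hD : HasDerivAt (fun x : ℂ => Δ ^ (m - (n : ℤ) - 1) * ∑ i ∈ Finset.range (n + 1),
      (n.choose i : ℂ) * (-c / Δ) ^ i * (c * x + d) ^ ((i : ℤ) - m) *
        f i ((a * x + b) / (c * x + d)))
      (Δ ^ (m - (n : ℤ) - 1) * ∑ i ∈ Finset.range (n + 1),
        ((n.choose i : ℂ) * (-c / Δ) ^ i *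
            ((((i : ℤ) - m : ℤ) : ℂ) * (c * z + d) ^ ((i : ℤ) - m - 1) * c) *
            f i ((a * z + b) / (c * z + d)) +
          (n.choose i : ℂ) * (-c / Δ) ^ i * (c * z + d) ^ ((i : ℤ) - m) *
            (deriv (f i) ((a * z + b) / (c * z + d)) * (Δ / (c * z + d) ^ 2)))) z :=
    hSum.const_mul _
  rw [hD.deriv]
  simp only [derivSystem]
  rw [Finset.mul_sum, Finset.mul_sum]
  refine assembly2 n _
    (fun i => Δ ^ (m + 2 - ((n + 1 : ℕ) : ℤ) - 1) *
      (((n + 1).choose i : ℂ) * (-c / Δ) ^ i * (c * z + d) ^ ((i : ℤ) - (m + 2)) *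
        ((i : ℂ) * ((m : ℂ) - (i : ℂ) + 1) / ((n : ℂ) + 1) *
          f (i - 1) ((a * z + b) / (c * z + d)))))
    (fun i => Δ ^ (m + 2 - ((n + 1 : ℕ) : ℤ) - 1) *
      (((n + 1).choose i : ℂ) * (-c / Δ) ^ i * (c * z + d) ^ ((i : ℤ) - (m + 2)) *
        (((n : ℂ) + 1 - (i : ℂ)) / ((n : ℂ) + 1) *
          deriv (f i) ((a * z + b) / (c * z + d)))))
    _ ?_ ?_ ?_ ?_
  · intro i _
    ring
  · intro i hi
    have hin : i < n + 1 := Finset.mem_range.mp hi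
    rw [Nat.add_sub_cancel]
    rw [show ((i + 1 : ℕ) : ℤ) - (m + 2) = (i : ℤ) - m - 1 from by push_cast; ring]
    have hY : (n.choose i : ℂ) * (-c / Δ) ^ i * (c * z + d) ^ ((i : ℤ) - m) *
          (deriv (f i) ((a * z + b) / (c * z + d)) * (Δ / (c * z + d) ^ 2))
        = (n.choose i : ℂ) * (-c / Δ) ^ i * (c * z + d) ^ ((i : ℤ) - (m + 2)) *
          deriv (f i) ((a * z + b) / (c * z + d)) * Δ := by
      rw [show (i : ℤ) - m = ((i : ℤ) - (m + 2)) + ((2 : ℕ) : ℤ) from by push_cast; ring,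
        zpow_add₀ hw, zpow_natCast]
      field_simp
    rw [hY]
    rw [show m + 2 - ((n + 1 : ℕ) : ℤ) - 1 = (m - (n : ℤ) - 1) + 1 from by push_cast; ring,
      zpow_add_one₀ hΔ]
    have hPc : Δ * (-c / Δ) = -c := by field_simp
    have ht : ((n : ℂ) + 1) / ((n : ℂ) + 1) = 1 := div_self hn1
    have h1 := congrArg (Nat.cast (R := ℂ)) (Nat.add_one_mul_choose_eq n i)
    push_cast at h1
    have h2 := congrArg (Nat.cast (R := ℂ)) (Nat.choose_mul_succ_eq n i)
    push_cast [Nat.cast_sub (show i ≤ n + 1 by omega)] at h2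
    push_cast
    linear_combination
      (Δ ^ (m - (n : ℤ) - 1) * (-c / Δ) ^ i * (c * z + d) ^ ((i : ℤ) - m - 1) * c *
          f i ((a * z + b) / (c * z + d)) * ((i : ℂ) - (m : ℂ)) / ((n : ℂ) + 1)) * h1 +
      (Δ ^ (m - (n : ℤ) - 1) * Δ * (-c / Δ) ^ i * (c * z + d) ^ ((i : ℤ) - (m + 2)) *
          deriv (f i) ((a * z + b) / (c * z + d)) / ((n : ℂ) + 1)) * h2 +
      (-(Δ ^ (m - (n : ℤ) - 1) * ((n + 1).choose (i + 1) : ℂ) * (-c / Δ) ^ i *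
          (c * z + d) ^ ((i : ℤ) - m - 1) * ((i : ℂ) + 1) * ((m : ℂ) - (i : ℂ)) *
          f i ((a * z + b) / (c * z + d)) / ((n : ℂ) + 1))) * hPc +
      (-(Δ ^ (m - (n : ℤ) - 1) * (n.choose i : ℂ) * (-c / Δ) ^ i *
            (c * z + d) ^ ((i : ℤ) - m - 1) * c * f i ((a * z + b) / (c * z + d)) *
            ((i : ℂ) - (m : ℂ))) -
        Δ ^ (m - (n : ℤ) - 1) * Δ * (n.choose i : ℂ) * (-c / Δ) ^ i *
            (c * z + d) ^ ((i : ℤ) - (m + 2)) * deriv (f i) ((a * z + b) / (c * z + d))) * ht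
  · simp
  · push_cast
    ring

/-- differentiation maps a cocycle system of depth `n` and weight `m` to one of
depth `n+1` and weight `m+2`, with zeroth member the derivative of the zeroth member, and the
double slash operator commutes with differentiation. -/
theorem cocycleSystem_deriv (n : ℕ) (m : ℤ) (f : ℕ → ℂ → ℂ)
    (hf : IsCocycleSystem n m f) :
    IsCocycleSystem (n + 1) (m + 2) (derivSystem n m f) ∧
    (∀ z : ℂ, derivSystem n m f 0 z = deriv (f 0) z) ∧
    (∀ A : Matrix (Fin 2) (Fin 2) ℝ, 0 < A.det → ∀ z : ℂ, 0 < z.im →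
      deriv (dslash n m f A) z = dslash (n + 1) (m + 2) (derivSystem n m f) A z) := by
  obtain ⟨hdiff, htrans⟩ := hf
  have hn1 : ((n : ℂ) + 1) ≠ 0 := Nat.cast_add_one_ne_zero n
  refine ⟨⟨?_, ?_⟩, ?_, ?_⟩
  · -- differentiability of the new system
    intro i hi
    rcases Nat.lt_or_ge i (n + 1) with h | h
    · exact ((hdiff (i - 1) (by omega)).const_mul _).add
        ((deriv_diffOn (hdiff i (by omega))).const_mul _)
    · have hi2 : i = n + 1 := by omega
      subst hi2
      have heq : derivSystem n m f (n + 1) =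
          fun z => (((n + 1 : ℕ) : ℂ) * ((m : ℂ) - ((n + 1 : ℕ) : ℂ) + 1) / ((n : ℂ) + 1)) *
            f n z := by
        funext z
        simp only [derivSystem]
        have h0 : ((n : ℂ) + 1 - ((n + 1 : ℕ) : ℂ)) = 0 := by push_cast; ring
        rw [h0]
        norm_num
      rw [heq]
      exact (hdiff n le_rfl).const_mul _
  · -- transformation law of the new system
    intro A hA i hi z hz
    have hdet2 : A 0 0 * A 1 1 - A 0 1 * A 1 0 = 1 := by
      rw [← Matrix.det_fin_two A]; exact hA
    have hdetR : ((A 0 0 : ℤ) : ℝ) * ((A 1 1 : ℤ) : ℝ) - ((A 0 1 : ℤ) : ℝ) * ((A 1 0 : ℤ) : ℝ)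
        = 1 := by exact_mod_cast hdet2
    have hw : ((A 1 0 : ℤ) : ℂ) * z + ((A 1 1 : ℤ) : ℂ) ≠ 0 := by
      have := denom_ne_zero ((A 0 0 : ℤ) : ℝ) ((A 0 1 : ℤ) : ℝ) ((A 1 0 : ℤ) : ℝ)
        ((A 1 1 : ℤ) : ℝ) (by rw [hdetR]; norm_num) hz
      push_cast at this
      exact this
    have hgz : 0 < ((((A 0 0 : ℤ) : ℂ) * z + ((A 0 1 : ℤ) : ℂ)) /
        (((A 1 0 : ℤ) : ℂ) * z + ((A 1 1 : ℤ) : ℂ))).im := by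
      have := mobius_mem ((A 0 0 : ℤ) : ℝ) ((A 0 1 : ℤ) : ℝ) ((A 1 0 : ℤ) : ℝ)
        ((A 1 1 : ℤ) : ℝ) (by rw [hdetR]; norm_num) hz
      push_cast at this
      exact this
    have hdetC : ((A 0 0 : ℤ) : ℂ) * ((A 1 1 : ℤ) : ℂ) - ((A 0 1 : ℤ) : ℂ) * ((A 1 0 : ℤ) : ℂ)
        = 1 := by exact_mod_cast hdet2
    rcases le_or_gt i n with hin | hin
    · exact key1 n m f _ _ _ _ hdiff hdetC i hin z hz hw hgz
        (fun k hk x hx => htrans A hA k hk x hx)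
    · have hieq : i = n + 1 := by omega
      subst hieq
      have hfn := htrans A hA n le_rfl z hz
      rw [show n - n = 0 from Nat.sub_self n, Finset.sum_range_one] at hfn
      rw [show n + 1 - (n + 1) = 0 from Nat.sub_self (n + 1), Finset.sum_range_one]
      simp only [derivSystem, Nat.add_sub_cancel, Nat.add_zero] at hfn ⊢
      rw [hfn]
      have h0 : ((n : ℂ) + 1 - ((n + 1 : ℕ) : ℂ)) = 0 := by push_cast; ring
      rw [h0]
      rw [show m + 2 - 2 * ((n + 1 : ℕ) : ℤ) - ((0 : ℕ) : ℤ)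
          = m - 2 * (n : ℤ) - ((0 : ℕ) : ℤ) from by push_cast; ring]
      push_cast
      ring
  · -- the zeroth member
    intro z
    simp [derivSystem, div_self hn1]
  · -- compatibility with the double slash operator
    intro A hdet z hz
    have hdetF : A.det = A 0 0 * A 1 1 - A 0 1 * A 1 0 := Matrix.det_fin_two A
    have hd0 : ((A 0 0 : ℝ) : ℂ) * ((A 1 1 : ℝ) : ℂ) - ((A 0 1 : ℝ) : ℂ) * ((A 1 0 : ℝ) : ℂ)
        = ((A.det : ℝ) : ℂ) := by rw [hdetF]; push_cast; ring
    have hΔ : ((A.det : ℝ) : ℂ) ≠ 0 := Complex.ofReal_ne_zero.mpr (ne_of_gt hdet)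
    have hw : ((A 1 0 : ℝ) : ℂ) * z + ((A 1 1 : ℝ) : ℂ) ≠ 0 :=
      denom_ne_zero (A 0 0) (A 0 1) (A 1 0) (A 1 1)
        (by rw [← hdetF]; exact ne_of_gt hdet) hz
    have hgz := mobius_mem (A 0 0) (A 0 1) (A 1 0) (A 1 1) (by rw [← hdetF]; exact hdet) hz
    exact key3 n m f ((A 0 0 : ℝ) : ℂ) ((A 0 1 : ℝ) : ℂ) ((A 1 0 : ℝ) : ℂ) ((A 1 1 : ℝ) : ℂ)
      ((A.det : ℝ) : ℂ) hdiff hd0 hΔ z hz hw hgz
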